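/- If P is a Puiseux monoid such that 0 is not a limit point of P (i.e., inf of the nonzero elements of P is positive), then P is atomic. -/
import Mathlib


/-- A Puiseux monoid: an additive submonoid of ℚ consisting of nonnegative rationals. -/
def PM.Puiseux (P : AddSubmonoid ℚ) : Prop := ∀ x ∈ P, 0 ≤ x

/-- `a` is an atom of `P`. -/
def PM.IsAtom (P : AddSubmonoid ℚ) (a : ℚ) : Prop :=
  a ∈ P ∧ a ≠ 0 ∧ ∀ x ∈ P, ∀ y ∈ P, a = x + y → x = 0 ∨ y = 0

/-- A factorization of `x` is a multiset of atoms of `P` summing to `x`. -/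
def PM.IsFactorization (P : AddSubmonoid ℚ) (x : ℚ) (z : Multiset ℚ) : Prop :=
  (∀ a ∈ z, PM.IsAtom P a) ∧ z.sum = x

/-- The set of lengths of `x`. -/
def PM.Lengths (P : AddSubmonoid ℚ) (x : ℚ) : Set ℕ :=
  {n | ∃ z : Multiset ℚ, PM.IsFactorization P x z ∧ Multiset.card z = n}

/-- `P` is atomic: it is generated by its set of atoms. -/
def PM.Atomic (P : AddSubmonoid ℚ) : Prop :=
  AddSubmonoid.closure {a | PM.IsAtom P a} = P

/-- The union of sets of lengths `U_k(P)`. -/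
def PM.U (P : AddSubmonoid ℚ) (k : ℕ) : Set ℕ :=
  {l | ∃ x ∈ P, k ∈ PM.Lengths P x ∧ l ∈ PM.Lengths P x}

theorem stmt2 (P : AddSubmonoid ℚ) (hP : PM.Puiseux P)
    (h0 : ∃ q : ℚ, 0 < q ∧ ∀ x ∈ P, x ≠ 0 → q ≤ x) :
    PM.Atomic P := by
  obtain ⟨q, hq, hmin⟩ := h0
  apply le_antisymm
  · exact AddSubmonoid.closure_le.mpr fun a ha => ha.1
  · intro x hx
    have key : ∀ n : ℕ, ∀ x ∈ P, x ≤ (n : ℚ) * q →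
        x ∈ AddSubmonoid.closure {a | PM.IsAtom P a} := by
      intro n
      induction n with
      | zero =>
        intro x hx hle
        have hx0 : x = 0 := le_antisymm (by simpa using hle) (hP x hx)
        rw [hx0]; exact zero_mem _
      | succ n ih =>
        intro x hx hle
        by_cases hx0 : x = 0
        · rw [hx0]; exact zero_mem _
        by_cases hat : PM.IsAtom P x
        · exact AddSubmonoid.subset_closure hat
        have hex : ∃ y ∈ P, ∃ z ∈ P, x = y + z ∧ y ≠ 0 ∧ z ≠ 0 := by
          unfold PM.IsAtom at hat
          push_neg at hat
          obtain ⟨y, hy, z, hz, hsum, hy0, hz0⟩ := hat hx hx0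
          exact ⟨y, hy, z, hz, hsum, hy0, hz0⟩
        obtain ⟨y, hy, z, hz, hsum, hy0, hz0⟩ := hex
        have hqy := hmin y hy hy0
        have hqz := hmin z hz hz0
        push_cast at hle
        have h1 : y ≤ (n : ℚ) * q := by rw [hsum] at hle; linarith
        have h2 : z ≤ (n : ℚ) * q := by rw [hsum] at hle; linarith
        rw [hsum]
        exact add_mem (ih y hy h1) (ih z hz h2)
    obtain ⟨n, hn⟩ := exists_nat_ge (x / q)
    exact key n x hx (by rwa [div_le_iff₀ hq] at hn)
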